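/- Let k ≤ n be natural numbers, k ≥ 1. In the polynomial ring over a commutative ring in variables x_1,...,x_n, the ideal generated by {e_1(x_1,...,x_n), ..., e_k(x_1,...,x_n)} equals the ideal generated by {h_1(x_1,...,x_n), h_2(x_1,...,x_{n-1}), ..., h_k(x_1,...,x_{n-k+1})}. -/

import Mathlib

open MvPolynomial Finset

/-- Elementary symmetric polynomial of degree `k` in the first `m` variables `x_1,…,x_m`
(0-indexed: the variables `X i` with `(i : ℕ) < m`), viewed in the polynomial ring in
`n` variables. It is `1` for `k = 0` and `0` for `k > m`. -/
noncomputable def esymb (R : Type) [CommRing R] (n m k : ℕ) : MvPolynomial (Fin n) R :=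
  ∑ S ∈ (Finset.univ.filter (fun i : Fin n => (i : ℕ) < m)).powersetCard k, ∏ i ∈ S, X i

/-- Complete homogeneous symmetric polynomial of degree `k` in the first `m` variables
`x_1,…,x_m` (0-indexed: the variables `X i` with `(i : ℕ) < m`), viewed in the polynomial
ring in `n` variables. It is `1` for `k = 0` and, for `k > 0`, it is `0` when `m = 0`. -/
noncomputable def hsymb (R : Type) [CommRing R] (n m k : ℕ) : MvPolynomial (Fin n) R :=
  ∑ μ ∈ (Finset.univ.filter (fun i : Fin n => (i : ℕ) < m)).sym k,
    ((μ : Multiset (Fin n)).map X).prod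


-- the sym insert decomposition
lemma sym_insert_eq {α : Type*} [DecidableEq α] {a : α} {s : Finset α} (h : a ∉ s) (k : ℕ) :
    (insert a s).sym (k+1) = s.sym (k+1) ∪ ((insert a s).sym k).image (Sym.cons a) := by
  ext μ
  simp only [Finset.mem_sym_iff, Finset.mem_union, Finset.mem_image, Finset.mem_insert]
  constructor
  · intro hμ
    by_cases ha : a ∈ μ
    · obtain ⟨ν, rfl⟩ := Sym.exists_cons_of_mem ha
      refine Or.inr ⟨ν, fun b hb => hμ b (Sym.mem_cons_of_mem hb), rfl⟩
    · refine Or.inl fun b hb => ?_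
      rcases hμ b hb with rfl | hbs
      · exact absurd hb ha
      · exact hbs
  · rintro (hμ | ⟨ν, hν, rfl⟩)
    · exact fun b hb => Or.inr (hμ b hb)
    · intro b hb
      rcases Sym.mem_cons.1 hb with rfl | hb
      · exact Or.inl rfl
      · exact hν b hb

variable (R : Type) [CommRing R] (n : ℕ)

lemma fset_succ {m : ℕ} (h : m < n) :
    (Finset.univ.filter (fun i : Fin n => (i : ℕ) < m + 1)) =
      insert ⟨m, h⟩ (Finset.univ.filter (fun i : Fin n => (i : ℕ) < m)) := by
  ext i
  simp [Nat.lt_succ_iff_lt_or_eq, Fin.ext_iff, or_comm]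
  exact le_iff_eq_or_lt

lemma fset_not_mem {m : ℕ} (h : m < n) :
    (⟨m, h⟩ : Fin n) ∉ (Finset.univ.filter (fun i : Fin n => (i : ℕ) < m)) := by simp

lemma esymb_zero (m : ℕ) : esymb R n m 0 = 1 := by simp [esymb]

lemma hsymb_zero (m : ℕ) : hsymb R n m 0 = 1 := by
  simp only [hsymb, Finset.sym_zero, Finset.sum_singleton]
  rfl

lemma esymb_m_zero (k : ℕ) : esymb R n 0 (k + 1) = 0 := by
  have : (Finset.univ.filter (fun i : Fin n => (i : ℕ) < 0)) = ∅ := by simp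
  rw [esymb, this, Finset.powersetCard_eq_empty.2 (by simp), Finset.sum_empty]

lemma hsymb_m_zero (k : ℕ) : hsymb R n 0 (k + 1) = 0 := by
  have : (Finset.univ.filter (fun i : Fin n => (i : ℕ) < 0)) = ∅ := by simp
  simp [hsymb, this]

lemma esymb_rec {m : ℕ} (h : m < n) (k : ℕ) :
    esymb R n (m + 1) (k + 1) =
      esymb R n m (k + 1) + X ⟨m, h⟩ * esymb R n m k := by
  have hdisj : Disjoint ((Finset.univ.filter (fun i : Fin n => (i : ℕ) < m)).powersetCard (k+1))
      (((Finset.univ.filter (fun i : Fin n => (i : ℕ) < m)).powersetCard k).image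
        (insert (⟨m, h⟩ : Fin n))) := by
    rw [Finset.disjoint_left]
    intro S hS hS'
    obtain ⟨T, hT, rfl⟩ := Finset.mem_image.1 hS'
    exact fset_not_mem n h ((Finset.mem_powersetCard.1 hS).1 (Finset.mem_insert_self _ _))
  rw [esymb, fset_succ n h, Finset.powersetCard_succ_insert (fset_not_mem n h),
    Finset.sum_union hdisj]
  congr 1
  rw [Finset.sum_image, esymb, Finset.mul_sum]
  · refine Finset.sum_congr rfl fun S hS => ?_
    rw [Finset.prod_insert]
    intro hmem
    exact fset_not_mem n h ((Finset.mem_powersetCard.1 hS).1 hmem)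
  · intro S hS T hT hST
    have hmS : (⟨m, h⟩ : Fin n) ∉ S := fun hc => fset_not_mem n h ((Finset.mem_powersetCard.1 hS).1 hc)
    have hmT : (⟨m, h⟩ : Fin n) ∉ T := fun hc => fset_not_mem n h ((Finset.mem_powersetCard.1 hT).1 hc)
    rw [← Finset.erase_insert hmS, ← Finset.erase_insert hmT, hST]

lemma hsymb_rec {m : ℕ} (h : m < n) (k : ℕ) :
    hsymb R n (m + 1) (k + 1) =
      hsymb R n m (k + 1) + X ⟨m, h⟩ * hsymb R n (m + 1) k := by
  have hdisj : Disjoint ((Finset.univ.filter (fun i : Fin n => (i : ℕ) < m)).sym (k+1))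
      (((insert (⟨m, h⟩ : Fin n) (Finset.univ.filter (fun i : Fin n => (i : ℕ) < m))).sym k).image
        (Sym.cons (⟨m, h⟩ : Fin n))) := by
    rw [Finset.disjoint_left]
    intro μ hμ hμ'
    obtain ⟨ν, _, rfl⟩ := Finset.mem_image.1 hμ'
    exact fset_not_mem n h (Finset.mem_sym_iff.1 hμ _ (Sym.mem_cons_self _ _))
  rw [hsymb, fset_succ n h, sym_insert_eq (fset_not_mem n h), Finset.sum_union hdisj]
  congr 1
  rw [Finset.sum_image (fun μ _ ν _ hμν => (Sym.cons_inj_right _ _ _).1 hμν),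
    hsymb, fset_succ n h, Finset.mul_sum]
  refine Finset.sum_congr rfl fun μ hμ => ?_
  rw [Sym.coe_cons, Multiset.map_cons, Multiset.prod_cons]

lemma phi_eq : ∀ m, m ≤ n → ∀ k : ℕ,
    ∑ i ∈ Finset.range (k+1),
      (-1 : MvPolynomial (Fin n) R)^i * esymb R n m i * hsymb R n m (k-i)
    = if k = 0 then 1 else 0 := by
  intro m
  induction m with
  | zero =>
    intro _ k
    cases k with
    | zero => simp [esymb_zero, hsymb_zero]
    | succ K =>
      rw [if_neg (Nat.succ_ne_zero K)]
      refine Finset.sum_eq_zero fun i hi => ?_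
      cases i with
      | zero => simp [hsymb_m_zero]
      | succ j => simp [esymb_m_zero]
  | succ m IH =>
    intro hm k
    have h : m < n := hm
    have hm' : m ≤ n := le_of_lt h
    cases k with
    | zero => simp [esymb_zero, hsymb_zero]
    | succ K =>
      rw [if_neg (Nat.succ_ne_zero K)]
      set x : MvPolynomial (Fin n) R := X ⟨m, h⟩ with hx
      set B : MvPolynomial (Fin n) R :=
        ∑ i ∈ Finset.range (K+1),
          (-1 : MvPolynomial (Fin n) R)^i * esymb R n m i * hsymb R n (m+1) (K-i) with hB
      set A : MvPolynomial (Fin n) R :=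
        ∑ i ∈ Finset.range (K+2),
          (-1 : MvPolynomial (Fin n) R)^i * esymb R n m i * hsymb R n (m+1) (K+1-i) with hA
      set C : MvPolynomial (Fin n) R :=
        ∑ i ∈ Finset.range (K+1),
          (-1 : MvPolynomial (Fin n) R)^i * esymb R n m i * hsymb R n m (K+1-i) with hC
      have h1 : (∑ i ∈ Finset.range (K+2),
          (-1 : MvPolynomial (Fin n) R)^i * esymb R n (m+1) i * hsymb R n (m+1) (K+1-i))
          = A - x * B := by
        rw [hA, hB, Finset.sum_range_succ' _ (K+1), Finset.sum_range_succ' _ (K+1),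
          Finset.mul_sum]
        have hpt : ∀ i ∈ Finset.range (K+1),
            (-1 : MvPolynomial (Fin n) R)^(i+1) * esymb R n (m+1) (i+1) * hsymb R n (m+1) (K+1-(i+1))
            = (-1 : MvPolynomial (Fin n) R)^(i+1) * esymb R n m (i+1) * hsymb R n (m+1) (K+1-(i+1))
              - x * ((-1 : MvPolynomial (Fin n) R)^i * esymb R n m i * hsymb R n (m+1) (K-i)) := by
          intro i _
          have : K + 1 - (i+1) = K - i := by omega
          rw [this, esymb_rec R n h]
          ring
        rw [Finset.sum_congr rfl hpt, Finset.sum_sub_distrib, esymb_zero, esymb_zero]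
        ring
      have h2 : A = (C + (-1 : MvPolynomial (Fin n) R)^(K+1) * esymb R n m (K+1)) + x * B := by
        rw [hA, Finset.sum_range_succ]
        have hpt : ∀ i ∈ Finset.range (K+1),
            (-1 : MvPolynomial (Fin n) R)^i * esymb R n m i * hsymb R n (m+1) (K+1-i)
            = (-1 : MvPolynomial (Fin n) R)^i * esymb R n m i * hsymb R n m (K+1-i)
              + x * ((-1 : MvPolynomial (Fin n) R)^i * esymb R n m i * hsymb R n (m+1) (K-i)) := by
          intro i hi
          have hiK : i ≤ K := Nat.lt_succ_iff.1 (Finset.mem_range.1 hi)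
          have hKi : K + 1 - i = (K - i) + 1 := by omega
          rw [hKi, hsymb_rec R n h]
          ring
        rw [Finset.sum_congr rfl hpt, Finset.sum_add_distrib, ← Finset.mul_sum, ← hB, ← hC]
        have : K + 1 - (K+1) = 0 := by omega
        rw [this, hsymb_zero]
        ring
      have h3 : C + (-1 : MvPolynomial (Fin n) R)^(K+1) * esymb R n m (K+1) = 0 := by
        have := IH hm' (K+1)
        rw [if_neg (Nat.succ_ne_zero K), Finset.sum_range_succ] at this
        have hz : K + 1 - (K+1) = 0 := by omega
        rw [hz, hsymb_zero, mul_one] at this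
        rw [← hC] at this
        exact this
      linear_combination h1 + h2 + h3

lemma key_eq : ∀ d m, m + d = n → ∀ k, n + 1 - m ≤ k →
    ∑ i ∈ Finset.range (k+1),
      (-1 : MvPolynomial (Fin n) R)^i * esymb R n n i * hsymb R n m (k-i) = 0 := by
  intro d
  induction d with
  | zero =>
    intro m hm k hk
    rw [Nat.add_zero] at hm
    subst hm
    have hk1 : k ≠ 0 := by omega
    rw [phi_eq R m m le_rfl k, if_neg hk1]
  | succ d IH =>
    intro m hm k hk
    have h : m < n := by omega
    cases k with
    | zero => omega
    | succ K =>
      rw [Finset.sum_range_succ]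
      have hpt : ∀ i ∈ Finset.range (K+1),
          (-1 : MvPolynomial (Fin n) R)^i * esymb R n n i * hsymb R n m (K+1-i)
          = (-1 : MvPolynomial (Fin n) R)^i * esymb R n n i * hsymb R n (m+1) (K+1-i)
            - X ⟨m, h⟩ * ((-1 : MvPolynomial (Fin n) R)^i * esymb R n n i * hsymb R n (m+1) (K-i)) := by
        intro i hi
        have hiK : i ≤ K := Nat.lt_succ_iff.1 (Finset.mem_range.1 hi)
        have hKi : K + 1 - i = (K - i) + 1 := by omega
        rw [hKi, hsymb_rec R n h]
        ring
      rw [Finset.sum_congr rfl hpt, Finset.sum_sub_distrib, ← Finset.mul_sum]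
      have IH1 := IH (m+1) (by omega) (K+1) (by omega)
      have IH2 := IH (m+1) (by omega) K (by omega)
      rw [Finset.sum_range_succ] at IH1
      have hz : K + 1 - (K+1) = 0 := by omega
      rw [hz] at IH1 ⊢
      rw [hsymb_zero] at IH1 ⊢
      linear_combination IH1 - X (⟨m, h⟩ : Fin n) * IH2

/-- ⟨e_1(x_1,…,x_n),…,e_k(x_1,…,x_n)⟩ = ⟨h_1(x_1,…,x_n),…,h_k(x_1,…,x_{n-k+1})⟩. -/
theorem stmt6 (R : Type) [CommRing R] (n k : ℕ) (hk : 1 ≤ k) (hkn : k ≤ n) :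
    Ideal.span ((fun i => esymb R n n i) '' Set.Icc 1 k) =
      Ideal.span ((fun i => hsymb R n (n + 1 - i) i) '' Set.Icc 1 k) := by
  set eGens := (fun i => esymb R n n i) '' Set.Icc 1 k with heG
  set hGens := (fun i => hsymb R n (n + 1 - i) i) '' Set.Icc 1 k with hhG
  have Ij : ∀ j, 1 ≤ j → j ≤ k →
      ∑ i ∈ Finset.range (j+1),
        (-1 : MvPolynomial (Fin n) R)^i * esymb R n n i * hsymb R n (n+1-j) (j-i) = 0 :=
    fun j h1 h2 => key_eq R n (n - (n+1-j)) (n+1-j) (by omega) j (by omega)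
  -- e generators are in the span of the h generators
  have he : ∀ j, 1 ≤ j → j ≤ k → esymb R n n j ∈ Ideal.span hGens := by
    intro j
    induction j using Nat.strong_induction_on with
    | _ j IH =>
      intro h1 h2
      have hI := Ij j h1 h2
      rw [Finset.sum_range_succ] at hI
      have hz : j - j = 0 := by omega
      rw [hz, hsymb_zero, mul_one] at hI
      have hSm : ∑ i ∈ Finset.range j,
          (-1 : MvPolynomial (Fin n) R)^i * esymb R n n i * hsymb R n (n+1-j) (j-i)
          ∈ Ideal.span hGens := by
        refine Ideal.sum_mem _ fun i hi => ?_
        have hij : i < j := Finset.mem_range.1 hi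
        cases i with
        | zero =>
          rw [pow_zero, esymb_zero, one_mul, one_mul, Nat.sub_zero]
          exact Ideal.subset_span ⟨j, Set.mem_Icc.2 ⟨h1, h2⟩, rfl⟩
        | succ i' =>
          exact Ideal.mul_mem_right _ _
            (Ideal.mul_mem_left _ _ (IH (i'+1) hij (Nat.succ_le_succ (Nat.zero_le _)) (by omega)))
      have hmem : (-1 : MvPolynomial (Fin n) R)^j * esymb R n n j ∈ Ideal.span hGens := by
        have : (-1 : MvPolynomial (Fin n) R)^j * esymb R n n j
            = -(∑ i ∈ Finset.range j,
              (-1 : MvPolynomial (Fin n) R)^i * esymb R n n i * hsymb R n (n+1-j) (j-i)) := by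
          linear_combination hI
        rw [this]
        exact neg_mem hSm
      have hsq : ((-1 : MvPolynomial (Fin n) R)^j) * ((-1 : MvPolynomial (Fin n) R)^j) = 1 := by
        rw [← pow_add, ← two_mul, pow_mul]
        norm_num
      have : esymb R n n j
          = (-1 : MvPolynomial (Fin n) R)^j * ((-1 : MvPolynomial (Fin n) R)^j * esymb R n n j) := by
        rw [← mul_assoc, hsq, one_mul]
      rw [this]
      exact Ideal.mul_mem_left _ _ hmem
  -- h generators are in the span of the e generators
  have hh : ∀ j, 1 ≤ j → j ≤ k → hsymb R n (n+1-j) j ∈ Ideal.span eGens := by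
    intro j h1 h2
    have hI := Ij j h1 h2
    rw [Finset.sum_range_succ' _ j] at hI
    rw [pow_zero, esymb_zero, one_mul, one_mul, Nat.sub_zero] at hI
    have : hsymb R n (n+1-j) j
        = -(∑ i ∈ Finset.range j,
            (-1 : MvPolynomial (Fin n) R)^(i+1) * esymb R n n (i+1) * hsymb R n (n+1-j) (j-(i+1))) := by
      linear_combination hI
    rw [this]
    refine neg_mem (Ideal.sum_mem _ fun i hi => ?_)
    have hij : i < j := Finset.mem_range.1 hi
    exact Ideal.mul_mem_right _ _
      (Ideal.mul_mem_left _ _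
        (Ideal.subset_span ⟨i+1, Set.mem_Icc.2 ⟨Nat.succ_le_succ (Nat.zero_le _), by omega⟩, rfl⟩))
  apply le_antisymm <;> rw [Ideal.span_le]
  · rintro _ ⟨j, hj, rfl⟩
    obtain ⟨h1, h2⟩ := Set.mem_Icc.1 hj
    exact he j h1 h2
  · rintro _ ⟨j, hj, rfl⟩
    obtain ⟨h1, h2⟩ := Set.mem_Icc.1 hj
    exact hh j h1 h2
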